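/- Let n be an integer with n ≡ 3 (mod 4) and n ≥ 3, and let m be an integer with m ≥ 3n + 5. Then every transposition of the form (i, i+2) with 1 ≤ i ≤ m − 2 belongs to C(n, m). Consequently, C(n, m) equals the parity-preserving subgroup P_m of S_m. -/

import Mathlib

/-- The underlying function of the `n`-crossing permutation `π_j` over `{1, …, m}` (as a
function on `ℕ`): it sends `j + k` to `j + n - 1 - k` for `0 ≤ k ≤ n - 1` and fixes all
other points. -/
def crossFun (n j i : ℕ) : ℕ :=
  if j ≤ i ∧ i < j + n then 2 * j + n - 1 - i else i

lemma crossFun_involutive (n j : ℕ) : Function.Involutive (crossFun n j) := by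
  intro i
  unfold crossFun
  split_ifs <;> omega

/-- The `n`-crossing permutation `π_j`, viewed as a permutation of `ℕ` fixing every point
outside `{j, …, j + n - 1}`. -/
def crossPerm (n j : ℕ) : Equiv.Perm ℕ :=
  Function.Involutive.toPerm _ (crossFun_involutive n j)

/-- `C n m` is the subgroup of the symmetric group `S_m` (realized as permutations of `ℕ`
supported on `{1, …, m}`) generated by the `n`-crossing permutations `π_1, …, π_{m-n+1}`. -/
def C (n m : ℕ) : Subgroup (Equiv.Perm ℕ) :=
  Subgroup.closure {σ | ∃ j, 1 ≤ j ∧ j ≤ m - n + 1 ∧ σ = crossPerm n j}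

/-! ### basics -/

lemma crossPerm_apply (n j i : ℕ) :
    crossPerm n j i = if j ≤ i ∧ i < j + n then 2 * j + n - 1 - i else i := rfl

lemma swap_apply (a b x : ℕ) :
    Equiv.swap a b x = if x = a then b else if x = b then a else x :=
  Equiv.swap_apply_def a b x

/-- 3-cycle `a → b → c → a`. -/
def trip (a b c : ℕ) : Equiv.Perm ℕ := Equiv.swap a c * Equiv.swap a b

lemma trip_apply (a b c x : ℕ) (hab : a ≠ b) (hac : a ≠ c) (hbc : b ≠ c) :
    trip a b c x = if x = a then b else if x = b then c else if x = c then a else x := by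
  simp only [trip, Equiv.Perm.mul_apply, swap_apply]
  split_ifs <;> simp_all

lemma trip_inv (a b c : ℕ) : (trip a b c)⁻¹ = trip a c b := by
  simp only [trip, mul_inv_rev, Equiv.swap_inv]

lemma trip_rot (a b c : ℕ) (hab : a ≠ b) (hac : a ≠ c) (hbc : b ≠ c) :
    trip a b c = trip b c a := by
  ext x
  rw [trip_apply a b c x hab hac hbc, trip_apply b c a x hbc (Ne.symm hab) (Ne.symm hac)]
  split_ifs <;> simp_all

lemma trip_conj (f : Equiv.Perm ℕ) (a b c : ℕ) :
    f * trip a b c * f⁻¹ = trip (f a) (f b) (f c) := by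
  simp only [trip]
  rw [show f * (Equiv.swap a c * Equiv.swap a b) * f⁻¹
      = (f * Equiv.swap a c * f⁻¹) * (f * Equiv.swap a b * f⁻¹) by group]
  rw [← Equiv.swap_apply_apply, ← Equiv.swap_apply_apply]

lemma gen_mem {n m : ℕ} (j : ℕ) (h1 : 1 ≤ j) (h2 : j + n ≤ m + 1) (hn : n ≤ m) :
    crossPerm n j ∈ C n m := by
  apply Subgroup.subset_closure
  exact ⟨j, h1, by omega, rfl⟩

lemma crossPerm_mul_self (k a : ℕ) : crossPerm k a * crossPerm k a = 1 := by
  ext x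
  exact crossFun_involutive k a x

lemma crossPerm_three (a : ℕ) : crossPerm 3 a = Equiv.swap a (a + 2) := by
  ext x
  rw [crossPerm_apply, swap_apply]
  split_ifs <;> omega

/-! ### pointwise identities -/

lemma Aid (k a : ℕ) (hk : 5 ≤ k) :
    crossPerm k (a+1) * crossPerm k a * crossPerm k (a+1) =
      Equiv.swap a (a+2) * crossPerm (k-2) (a+3) := by
  ext x
  simp only [Equiv.Perm.mul_apply, crossPerm_apply, swap_apply]
  split_ifs <;> omega

lemma Bid (k a : ℕ) (hk : 5 ≤ k) :
    crossPerm k a * crossPerm k (a+1) * crossPerm k a =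
      crossPerm (k-2) a * Equiv.swap (a+k-2) (a+k) := by
  ext x
  simp only [Equiv.Perm.mul_apply, crossPerm_apply, swap_apply]
  split_ifs <;> omega

lemma vid (n j : ℕ) (hn : 3 ≤ n) :
    crossPerm n (j+1) * crossPerm n j * crossPerm n (j+1) * crossPerm n (j+2) =
      trip j (j+2) (j+n+1) := by
  ext x
  simp only [trip, Equiv.Perm.mul_apply, crossPerm_apply, swap_apply]
  split_ifs <;> omega

lemma rho_apply (n j x : ℕ) (hn : 3 ≤ n) :
    (crossPerm n (j+1) * crossPerm n j) x =
      if j ≤ x ∧ x ≤ j + n - 2 then x + 2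
      else if x = j + n - 1 then j
      else if x = j + n then j + 1 else x := by
  simp only [Equiv.Perm.mul_apply, crossPerm_apply]
  split_ifs <;> omega

lemma trip_comp (a b c : ℕ) (hb : b ≠ a + 2) (hc : c ≠ a + 2)
    (hbc : b ≠ c) (hab : a ≠ b) (hac : a ≠ c) :
    trip a b c = trip a (a+2) c * trip a b (a+2) := by
  ext x
  simp only [trip, Equiv.Perm.mul_apply, swap_apply]
  split_ifs <;> omega

lemma M2same_id (a b c d : ℕ) (hab : a ≠ b) (hcd : c ≠ d)
    (h1 : a ≠ c) (h2 : a ≠ d) (h3 : b ≠ c) (h4 : b ≠ d) :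
    Equiv.swap a b * Equiv.swap c d = trip a c b * trip a c d := by
  ext x
  simp only [Equiv.Perm.mul_apply, swap_apply,
    trip_apply a c b _ h1 hab (fun h => h3 h.symm),
    trip_apply a c d _ h1 h2 hcd]
  split_ifs <;> omega

lemma swapdecomp (a b : ℕ) (hba : b ≠ a) (hba2 : b ≠ a + 2) :
    Equiv.swap a b = trip a (a+2) b * Equiv.swap a (a+2) := by
  ext x
  simp only [trip, Equiv.Perm.mul_apply, swap_apply]
  split_ifs <;> omega

lemma twostep (c : ℕ) : Equiv.swap c (c+2) * Equiv.swap (c+2) (c+4) = trip c (c+2) (c+4) := by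
  ext x
  simp only [trip, Equiv.Perm.mul_apply, swap_apply]
  split_ifs <;> omega

lemma swap_comm_disj (a b c d : ℕ) (h1 : a ≠ c) (h2 : a ≠ d) (h3 : b ≠ c) (h4 : b ≠ d) :
    Equiv.swap a b * Equiv.swap c d = Equiv.swap c d * Equiv.swap a b := by
  ext x
  simp only [Equiv.Perm.mul_apply, swap_apply]
  split_ifs <;> omega
/-! ### The parity subgroup -/

def Kpred (m : ℕ) (σ : Equiv.Perm ℕ) : Prop :=
  (∀ i, 1 ≤ i → i ≤ m → σ i % 2 = i % 2) ∧ (∀ i, σ i ≠ i → 1 ≤ i ∧ i ≤ m)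

lemma Kpred.moved_bounds {m : ℕ} {σ : Equiv.Perm ℕ} (h : Kpred m σ) {i : ℕ}
    (hi : σ i ≠ i) : 1 ≤ σ i ∧ σ i ≤ m := by
  have : σ (σ i) ≠ σ i := fun hh => hi (σ.injective hh)
  exact h.2 _ this

def Kgrp (m : ℕ) : Subgroup (Equiv.Perm ℕ) where
  carrier := {σ | Kpred m σ}
  one_mem' := ⟨fun i _ _ => rfl, fun i hi => absurd rfl hi⟩
  mul_mem' := by
    rintro σ τ ⟨hσ1, hσ2⟩ ⟨hτ1, hτ2⟩
    constructor
    · intro i h1 h2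
      simp only [Equiv.Perm.mul_apply]
      by_cases hti : τ i = i
      · rw [hti]; exact hσ1 i h1 h2
      · have hb := Kpred.moved_bounds ⟨hτ1, hτ2⟩ hti
        rw [hσ1 _ hb.1 hb.2, hτ1 i h1 h2]
    · intro i hi
      simp only [Equiv.Perm.mul_apply] at hi
      by_cases hti : τ i = i
      · rw [hti] at hi; exact hσ2 i hi
      · exact hτ2 i hti
  inv_mem' := by
    rintro σ ⟨h1, h2⟩
    constructor
    · intro i hi1 hi2
      by_cases hy : σ⁻¹ i = i
      · rw [hy]
      · have hmoved : σ (σ⁻¹ i) ≠ σ⁻¹ i := by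
          rw [show σ (σ⁻¹ i) = i from σ.apply_symm_apply i]; exact fun hh => hy hh.symm
        have hb := h2 _ hmoved
        have := h1 _ hb.1 hb.2
        rw [show σ (σ⁻¹ i) = i from σ.apply_symm_apply i] at this
        omega
    · intro i hi
      have : σ i ≠ i := fun hh =>
        hi (by rw [show σ⁻¹ i = σ⁻¹ (σ i) by rw [hh], show σ⁻¹ (σ i) = i from σ.symm_apply_apply i])
      exact h2 i this

lemma C_le_K {n m : ℕ} (hn : n % 4 = 3) (hnm : n + 1 ≤ m) : C n m ≤ Kgrp m := by
  apply (Subgroup.closure_le _).mpr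
  rintro σ ⟨j, hj1, hj2, rfl⟩
  have hjm : j + n ≤ m + 1 := by omega
  constructor
  · intro i h1 h2
    rw [crossPerm_apply]
    split_ifs with h
    · omega
    · rfl
  · intro i hi
    rw [crossPerm_apply] at hi
    split_ifs at hi with h
    · omega
    · exact absurd rfl hi

/-! ### Sorting: K-elements are products of the swaps (i, i+2) -/

section sorting
variable {n m : ℕ}

lemma swap_chain (hsw : ∀ i, 1 ≤ i → i + 2 ≤ m → Equiv.swap i (i+2) ∈ C n m) :
    ∀ r a, 1 ≤ a → a + 2*r ≤ m → Equiv.swap a (a + 2*r) ∈ C n m := by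
  intro r
  induction r with
  | zero => intro a _ _; simp only [Nat.mul_zero, Nat.add_zero, Equiv.swap_self]; exact Subgroup.one_mem _
  | succ r ih =>
    intro a h1 h2
    rcases Nat.eq_zero_or_pos r with hr | hr
    · subst hr
      simpa using hsw a h1 (by omega)
    · have key : Equiv.swap a (a + 2*(r+1)) =
          Equiv.swap (a + 2*r) (a + 2*r + 2) * Equiv.swap a (a + 2*r) *
            Equiv.swap (a + 2*r) (a + 2*r + 2) := by
        ext x
        simp only [Equiv.Perm.mul_apply, swap_apply]
        split_ifs <;> omega
      rw [key]
      have h3 := hsw (a + 2*r) (by omega) (by omega)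
      exact mul_mem (mul_mem h3 (ih a h1 (by omega))) h3

lemma sort_aux (hm : n + 1 ≤ m) (hn4 : n % 4 = 3)
    (hsw : ∀ i, 1 ≤ i → i + 2 ≤ m → Equiv.swap i (i+2) ∈ C n m) :
    ∀ N σ, Kpred m σ → (∀ y, y > N → σ y = y) → σ ∈ C n m := by
  intro N
  induction N with
  | zero =>
    intro σ hσ hfix
    have : σ = 1 := by
      ext y
      rcases Nat.eq_zero_or_pos y with hy | hy
      · subst hy
        by_contra hc
        have := (hσ.2 0 hc).1
        omega
      · exact hfix y hy
    rw [this]; exact Subgroup.one_mem _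
  | succ N ih =>
    intro σ hσ hfix
    by_cases hN : σ (N+1) = N+1
    · apply ih σ hσ
      intro y hy
      rcases Nat.lt_or_ge N y with h | h
      · rcases Nat.eq_or_lt_of_le h with h' | h'
        · rw [← h']; exact hN
        · exact hfix y h'
      · omega
    · set a := σ (N+1) with ha
      have hbnd : 1 ≤ N + 1 ∧ N + 1 ≤ m := hσ.2 _ hN
      have hab : 1 ≤ a ∧ a ≤ m := hσ.moved_bounds hN
      have hpar : a % 2 = (N+1) % 2 := hσ.1 _ hbnd.1 hbnd.2
      have haN : a < N + 1 := by
        rcases Nat.lt_or_ge a (N+1) with h | h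
        · exact h
        · rcases Nat.eq_or_lt_of_le h with h' | h'
          · exact absurd h'.symm hN
          · exfalso; exact hN (σ.injective (by rw [hfix a h'] ))
      obtain ⟨r, hr⟩ : ∃ r, N + 1 = a + 2*r := ⟨(N+1-a)/2, by omega⟩
      have hswm : Equiv.swap a (N+1) ∈ C n m := by
        rw [hr]; exact swap_chain hsw r a hab.1 (by omega)
      have hσ' : Kpred m (Equiv.swap a (N+1) * σ) :=
        (Kgrp m).mul_mem (C_le_K hn4 hm hswm) hσ
      have : (Equiv.swap a (N+1) * σ) ∈ C n m := by
        apply ih _ hσ'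
        intro y hy
        rcases Nat.eq_or_lt_of_le hy with h' | h'
        · simp only [Equiv.Perm.mul_apply, ← h', ← ha]
          exact Equiv.swap_apply_left a (N+1)
        · simp only [Equiv.Perm.mul_apply, hfix y (by omega)]
          exact Equiv.swap_apply_of_ne_of_ne (by omega) (by omega)
      have := mul_mem hswm this
      rwa [← mul_assoc, Equiv.swap_mul_self, one_mul] at this
  end sorting
/-! ### building blocks in C -/

section blocks
variable {n m : ℕ}

lemma A_mem (hn : 5 ≤ n) (hm : n + 1 ≤ m) (j : ℕ) (h1 : 1 ≤ j) (h2 : j + 1 + n ≤ m + 1) :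
    Equiv.swap j (j+2) * crossPerm (n-2) (j+3) ∈ C n m := by
  rw [← Aid n j hn]
  have g1 := gen_mem (n := n) (m := m) j h1 (by omega) (by omega)
  have g2 := gen_mem (n := n) (m := m) (j+1) (by omega) (by omega) (by omega)
  exact mul_mem (mul_mem g2 g1) g2

lemma B_mem (hn : 5 ≤ n) (hm : n + 1 ≤ m) (j : ℕ) (h1 : 1 ≤ j) (h2 : j + 1 + n ≤ m + 1) :
    crossPerm (n-2) j * Equiv.swap (j+n-2) (j+n) ∈ C n m := by
  rw [← Bid n j hn]
  have g1 := gen_mem (n := n) (m := m) j h1 (by omega) (by omega)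
  have g2 := gen_mem (n := n) (m := m) (j+1) (by omega) (by omega) (by omega)
  exact mul_mem (mul_mem g1 g2) g1

lemma D_mem (hn : 5 ≤ n) (hm : n + 1 ≤ m) (j : ℕ) (h1 : 1 ≤ j) (h2 : j + 4 + n ≤ m + 1) :
    Equiv.swap j (j+2) * Equiv.swap (j+n+1) (j+n+3) ∈ C n m := by
  have hA := A_mem hn hm j h1 (by omega)
  have hB := B_mem hn hm (j+3) (by omega) (by omega)
  have := mul_mem hA hB
  have heq : (Equiv.swap j (j+2) * crossPerm (n-2) (j+3)) *
      (crossPerm (n-2) (j+3) * Equiv.swap (j+3+n-2) (j+3+n)) =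
      Equiv.swap j (j+2) * Equiv.swap (j+n+1) (j+n+3) := by
    rw [mul_assoc, ← mul_assoc (crossPerm (n-2) (j+3)), crossPerm_mul_self, one_mul]
    congr 2 <;> omega
  rwa [heq] at this

lemma v_mem (hn : 3 ≤ n) (hm : n + 1 ≤ m) (j : ℕ) (h1 : 1 ≤ j) (h2 : j + 2 + n ≤ m + 1) :
    trip j (j+2) (j+n+1) ∈ C n m := by
  rw [← vid n j hn]
  have g0 := gen_mem (n := n) (m := m) j h1 (by omega) (by omega)
  have g1 := gen_mem (n := n) (m := m) (j+1) (by omega) (by omega) (by omega)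
  have g2 := gen_mem (n := n) (m := m) (j+2) (by omega) (by omega) (by omega)
  exact mul_mem (mul_mem (mul_mem g1 g0) g1) g2

/-- descent: triples (j, j+2, j+2g) for 2 ≤ g ≤ (n+1)/2, for j near the bottom. -/
lemma trip_descent (hn : 7 ≤ n) (hnm : n % 4 = 3) (hm : 3*n + 5 ≤ m) (j : ℕ)
    (h1 : 1 ≤ j) (hj : j + 2*n ≤ m) :
    ∀ d g, 2 ≤ g → g + d = (n+1)/2 → trip j (j+2) (j+2*g) ∈ C n m := by
  intro d
  induction d with
  | zero =>
    intro g hg2 hg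
    have : 2*g = n + 1 := by omega
    rw [this, ← add_assoc]
    exact v_mem (by omega) (by omega) j h1 (by omega)
  | succ d ih =>
    intro g hg2 hg
    have hprev := ih (g+1) (by omega) (by omega)
    set φ := trip (j+2*g) (j+2*g+2) (j+2*g+n+1) with hφ
    have hφmem : φ ∈ C n m := by
      have : j+2*g+2+n ≤ m + 1 := by
        have : 2*(g+1) ≤ n + 1 := by omega
        omega
      exact v_mem (by omega) (by omega) (j+2*g) (by omega) this
    have hconj := trip_conj φ⁻¹ j (j+2) (j+2*(g+1))
    rw [inv_inv] at hconj
    have hval : φ⁻¹ j = j ∧ φ⁻¹ (j+2) = j+2 ∧ φ⁻¹ (j+2*(g+1)) = j+2*g := by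
      rw [hφ, trip_inv]
      refine ⟨?_, ?_, ?_⟩ <;>
        · rw [trip_apply _ _ _ _ (by omega) (by omega) (by omega)]
          split_ifs <;> omega
    rw [hval.1, hval.2.1, hval.2.2] at hconj
    rw [← hconj]
    exact mul_mem (mul_mem (inv_mem hφmem) hprev) hφmem

/-- all adjacent triples. -/
lemma trip_adj (hn : 7 ≤ n) (hnm : n % 4 = 3) (hm : 3*n + 5 ≤ m) :
    ∀ a, 1 ≤ a → a + 4 ≤ m → trip a (a+2) (a+4) ∈ C n m := by
  intro a
  induction a using Nat.strong_induction_on with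
  | _ a IH =>
    intro h1 h2
    rcases Nat.lt_or_ge a 3 with ha | ha
    · have := trip_descent hn hnm hm a h1 (by omega) ((n+1)/2 - 2) 2 le_rfl (by omega)
      simpa using this
    · -- conjugate trip (a-2) (a) (a+2) by ρ_j
      set j := min (a-2) (m - n) with hj
      have hj1 : 1 ≤ j := by omega
      have hjn : j + 1 + n ≤ m + 1 := by omega
      set ρ := crossPerm n (j+1) * crossPerm n j with hρ
      have hρmem : ρ ∈ C n m :=
        mul_mem (gen_mem (j+1) (by omega) (by omega) (by omega))
          (gen_mem j hj1 (by omega) (by omega))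
      have hprev := IH (a-2) (by omega) (by omega) (by omega)
      have hconj := trip_conj ρ (a-2) (a-2+2) (a-2+4)
      have hvals : ρ (a-2) = a ∧ ρ (a-2+2) = a + 2 ∧ ρ (a-2+4) = a + 4 := by
        have hwin : a - 2 + 4 ≤ j + n - 2 := by omega
        refine ⟨?_, ?_, ?_⟩ <;>
          · rw [hρ, rho_apply n j _ (by omega)]
            split_ifs <;> omega
      rw [hvals.1, hvals.2.1, hvals.2.2] at hconj
      have : trip a (a+2) (a+4) = ρ * trip (a-2) (a-2+2) (a-2+4) * ρ⁻¹ := by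
        rw [hconj]
      rw [this]
      exact mul_mem (mul_mem hρmem hprev) (inv_mem hρmem)

/-- triples (a, a+2, b). -/
lemma trip_right (hn : 7 ≤ n) (hnm : n % 4 = 3) (hm : 3*n + 5 ≤ m) :
    ∀ b a, 1 ≤ a → a + 2 < b → b ≤ m → b % 2 = a % 2 → trip a (a+2) b ∈ C n m := by
  intro b
  induction b using Nat.strong_induction_on with
  | _ b IH =>
    intro a h1 h2 h3 h4
    rcases Nat.lt_or_ge b (a+5) with hb | hb
    · have : b = a + 4 := by omega
      subst this
      exact trip_adj hn hnm hm a h1 h3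
    rcases Nat.lt_or_ge b (a+7) with hb' | hb'
    · -- b = a + 6
      have hb6 : b = a + 6 := by omega
      subst hb6
      set f := (trip a (a+2) (a+4))⁻¹ with hf
      have hconj := trip_conj f (a+2) (a+4) (a+6)
      have hvals : f (a+2) = a ∧ f (a+4) = a+2 ∧ f (a+6) = a+6 := by
        rw [hf, trip_inv]
        refine ⟨?_, ?_, ?_⟩ <;>
          · rw [trip_apply _ _ _ _ (by omega) (by omega) (by omega)]
            split_ifs <;> omega
      rw [hvals.1, hvals.2.1, hvals.2.2] at hconj
      rw [← hconj]
      have ht1 := trip_adj hn hnm hm a h1 (by omega)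
      have ht2 := trip_adj hn hnm hm (a+2) (by omega) (by omega)
      exact mul_mem (mul_mem (inv_mem ht1) ht2) (inv_mem (inv_mem ht1))
    · -- b ≥ a + 8 : conjugate trip a (a+2) (b-2) by trip (b-4) (b-2) b
      set φ := trip (b-4) (b-2) b with hφ
      have hφmem : φ ∈ C n m := by
        have heq : trip (b-4) (b-2) b = trip (b-4) (b-4+2) (b-4+4) := by
          congr 1 <;> omega
        rw [hφ, heq]
        exact trip_adj hn hnm hm (b-4) (by omega) (by omega)
      have hprev := IH (b-2) (by omega) a h1 (by omega) (by omega) (by omega)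
      have hconj := trip_conj φ a (a+2) (b-2)
      have hvals : φ a = a ∧ φ (a+2) = a+2 ∧ φ (b-2) = b := by
        refine ⟨?_, ?_, ?_⟩ <;>
          · rw [hφ, trip_apply _ _ _ _ (by omega) (by omega) (by omega)]
            split_ifs <;> omega
      rw [hvals.1, hvals.2.1, hvals.2.2] at hconj
      rw [← hconj]
      exact mul_mem (mul_mem hφmem hprev) (inv_mem hφmem)

/-- all parity-pure 3-cycles. -/
lemma trip_general (hn : 7 ≤ n) (hnm : n % 4 = 3) (hm : 3*n + 5 ≤ m) :
    ∀ a b c, 1 ≤ a → 1 ≤ b → 1 ≤ c → a ≤ m → b ≤ m → c ≤ m →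
      a % 2 = b % 2 → b % 2 = c % 2 → a ≠ b → b ≠ c → a ≠ c →
      trip a b c ∈ C n m := by
  have core : ∀ a b c, 1 ≤ a → a ≤ m → b ≤ m → c ≤ m →
      a % 2 = b % 2 → b % 2 = c % 2 → a < b → a < c → b ≠ c →
      trip a b c ∈ C n m := by
    intro a b c h1 ham hbm hcm hp1 hp2 hab hac hbc
    by_cases hb2 : b = a + 2
    · subst hb2
      exact trip_right hn hnm hm c a h1 (by omega) hcm (by omega)
    by_cases hc2 : c = a + 2
    · subst hc2
      rw [show trip a b (a+2) = (trip a (a+2) b)⁻¹ by rw [trip_inv]]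
      exact inv_mem (trip_right hn hnm hm b a h1 (by omega) hbm (by omega))
    · rw [trip_comp a b c hb2 hc2 hbc (by omega) (by omega)]
      have m1 := trip_right hn hnm hm c a h1 (by omega) hcm (by omega)
      have m2 := trip_right hn hnm hm b a h1 (by omega) hbm (by omega)
      rw [show trip a b (a+2) = (trip a (a+2) b)⁻¹ by rw [trip_inv]]
      exact mul_mem m1 (inv_mem m2)
  intro a b c h1 h2 h3 ham hbm hcm hp1 hp2 hab hbc hac
  rcases Nat.lt_or_ge a b with h | h
  · rcases Nat.lt_or_ge a c with h' | h'
    · exact core a b c h1 ham hbm hcm hp1 hp2 h h' hbc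
    · -- c < a < b : rotate to start at c
      rw [trip_rot a b c hab hac hbc, trip_rot b c a hbc (Ne.symm hab) (Ne.symm hac)]
      exact core c a b h3 hcm ham hbm (by omega) (by omega) (by omega) (by omega) hab
  · -- b < a
    rcases Nat.lt_or_ge b c with h' | h'
    · rw [trip_rot a b c hab hac hbc]
      exact core b c a h2 hbm hcm ham hp2 (by omega) h' (by omega) (Ne.symm hac)
    · -- c < b < a
      rw [trip_rot a b c hab hac hbc, trip_rot b c a hbc (Ne.symm hab) (Ne.symm hac)]
      exact core c a b h3 hcm ham hbm (by omega) (by omega) (by omega) (by omega) hab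

end blocks
/-! ### cycles on a parity class -/

def cyc (a : ℕ) : ℕ → Equiv.Perm ℕ
  | 0 => 1
  | k+1 => cyc a k * Equiv.swap (a + 2*k) (a + 2*k + 2)

lemma cyc_apply (a : ℕ) : ∀ k x, cyc a k x =
    if x = a + 2*k then a
    else if a ≤ x ∧ x < a + 2*k ∧ (x - a) % 2 = 0 then x + 2
    else x := by
  intro k
  induction k with
  | zero =>
    intro x
    simp only [cyc, Equiv.Perm.one_apply]
    split_ifs <;> omega
  | succ k ih =>
    intro x
    show (cyc a k * Equiv.swap (a + 2*k) (a + 2*k + 2)) x = _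
    rw [Equiv.Perm.mul_apply, swap_apply]
    split_ifs with h1 h2 <;> rw [ih] <;> split_ifs <;> omega

lemma cyc_tripstep (a k : ℕ) :
    cyc a (k+2) = cyc a k * trip (a + 2*k) (a + 2*k + 2) (a + 2*k + 4) := by
  show cyc a (k+1) * _ = _
  show cyc a k * _ * _ = _
  rw [mul_assoc]
  congr 1
  rw [show a + 2*(k+1) = a + 2*k + 2 by ring, show a + 2*k + 2 + 2 = a + 2*k + 4 by ring]
  exact twostep _

section cycmem
variable {n m : ℕ}

lemma cyc_smem (hn : 7 ≤ n) (hnm : n % 4 = 3) (hm : 3*n + 5 ≤ m) :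
    ∀ r a, 1 ≤ a → a + 2*(2*r+1) ≤ m → Equiv.swap a (a+2) * cyc a (2*r+1) ∈ C n m := by
  intro r
  induction r with
  | zero =>
    intro a h1 h2
    show Equiv.swap a (a+2) * (cyc a 0 * _) ∈ _
    rw [show cyc a 0 = 1 from rfl, one_mul]
    rw [show a + 2*0 = a by ring, show a + 2*0 + 2 = a + 2 by ring, Equiv.swap_mul_self]
    exact Subgroup.one_mem _
  | succ r ih =>
    intro a h1 h2
    have : 2*(r+1)+1 = (2*r+1)+2 := by ring
    rw [this, cyc_tripstep, ← mul_assoc]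
    refine mul_mem (ih a h1 (by omega)) ?_
    have heq : trip (a + 2*(2*r+1)) (a + 2*(2*r+1) + 2) (a + 2*(2*r+1) + 4) =
        trip (a + 2*(2*r+1)) ((a + 2*(2*r+1))+2) ((a + 2*(2*r+1))+4) := rfl
    rw [heq]
    exact trip_adj hn hnm hm _ (by omega) (by omega)

lemma rho_split (k j : ℕ) (hk : 1 ≤ k) :
    crossPerm (2*k+1) (j+1) * crossPerm (2*k+1) j = cyc j k * cyc (j+1) k := by
  ext x
  rw [Equiv.Perm.mul_apply, Equiv.Perm.mul_apply, crossPerm_apply, crossPerm_apply,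
    cyc_apply, cyc_apply]
  split_ifs <;> omega

lemma comm_swap_cyc (a k u v : ℕ) (hu : (u < a ∨ a + 2*k < u) ∨ (u - a) % 2 = 1)
    (hv : (v < a ∨ a + 2*k < v) ∨ (v - a) % 2 = 1) :
    Equiv.swap u v * cyc a k = cyc a k * Equiv.swap u v := by
  ext x
  rw [Equiv.Perm.mul_apply, Equiv.Perm.mul_apply, swap_apply, cyc_apply, cyc_apply, swap_apply]
  split_ifs <;> omega

/-- the basic cross-parity pair. -/
lemma F_mem_base (hn : 7 ≤ n) (hnm : n % 4 = 3) (hm : 3*n + 5 ≤ m) (j : ℕ)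
    (h1 : 1 ≤ j) (h2 : j + n ≤ m) :
    Equiv.swap j (j+2) * Equiv.swap (j+1) (j+3) ∈ C n m := by
  obtain ⟨q, hq⟩ : ∃ q, n = 4*q + 3 := ⟨n/4, by omega⟩
  set k := 2*q + 1 with hk
  have hρ : crossPerm n (j+1) * crossPerm n j = cyc j k * cyc (j+1) k := by
    rw [show n = 2*k+1 by omega]
    exact rho_split k j (by omega)
  have hρmem : cyc j k * cyc (j+1) k ∈ C n m := by
    rw [← hρ]
    exact mul_mem (gen_mem (j+1) (by omega) (by omega) (by omega))
      (gen_mem j h1 (by omega) (by omega))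
  have hA := cyc_smem hn hnm hm q j h1 (by omega)
  have hB := cyc_smem hn hnm hm q (j+1) (by omega) (by omega)
  rw [← hk] at hA hB
  have hcomm : cyc j k * Equiv.swap (j+1) (j+3) = Equiv.swap (j+1) (j+3) * cyc j k := by
    rw [comm_swap_cyc j k (j+1) (j+3) (Or.inr (by omega)) (Or.inr (by omega))]
  have key : Equiv.swap j (j+2) * Equiv.swap (j+1) (j+3) =
      (Equiv.swap j (j+2) * cyc j k) * (Equiv.swap (j+1) (j+3) * cyc (j+1) k) *
        (cyc j k * cyc (j+1) k)⁻¹ := by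
    rw [mul_assoc (Equiv.swap j (j+2)) (cyc j k), ← mul_assoc (cyc j k), hcomm]
    group
  rw [key]
  exact mul_mem (mul_mem hA hB) (inv_mem hρmem)

/-- cross-parity adjacent pairs at all positions. -/
lemma F_mem (hn : 7 ≤ n) (hnm : n % 4 = 3) (hm : 3*n + 5 ≤ m) :
    ∀ j, 1 ≤ j → j + 3 ≤ m → Equiv.swap j (j+2) * Equiv.swap (j+1) (j+3) ∈ C n m := by
  intro j
  induction j using Nat.strong_induction_on with
  | _ j IH =>
    intro h1 h2
    rcases le_or_gt (j + n) m with hc | hc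
    · exact F_mem_base hn hnm hm j h1 hc
    · -- j ≥ 3 here since m ≥ 3n+5
      have hj3 : 3 ≤ j := by omega
      have hprev := IH (j-2) (by omega) (by omega) (by omega)
      set c := trip (j-2) j (j+2) * trip (j-1) (j+1) (j+3) with hc'
      have hcmem : c ∈ C n m := by
        refine mul_mem ?_ ?_
        · rw [show trip (j-2) j (j+2) = trip (j-2) ((j-2)+2) ((j-2)+4) by congr 1 <;> omega]
          exact trip_adj hn hnm hm (j-2) (by omega) (by omega)
        · rw [show trip (j-1) (j+1) (j+3) = trip (j-1) ((j-1)+2) ((j-1)+4) by congr 1 <;> omega]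
          exact trip_adj hn hnm hm (j-1) (by omega) (by omega)
      have hcv : c (j-2) = j ∧ c (j-2+2) = j+2 ∧ c (j-2+1) = j+1 ∧ c (j-2+3) = j+3 := by
        rw [hc']
        refine ⟨?_, ?_, ?_, ?_⟩ <;>
          · rw [Equiv.Perm.mul_apply,
              trip_apply _ _ _ _ (by omega) (by omega) (by omega),
              trip_apply _ _ _ _ (by omega) (by omega) (by omega)]
            split_ifs <;> omega
      have key : c * (Equiv.swap (j-2) (j-2+2) * Equiv.swap (j-2+1) (j-2+3)) * c⁻¹ =
          Equiv.swap j (j+2) * Equiv.swap (j+1) (j+3) := by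
        rw [show c * (Equiv.swap (j-2) (j-2+2) * Equiv.swap (j-2+1) (j-2+3)) * c⁻¹
            = (c * Equiv.swap (j-2) (j-2+2) * c⁻¹) * (c * Equiv.swap (j-2+1) (j-2+3) * c⁻¹) by
              group]
        rw [← Equiv.swap_apply_apply, ← Equiv.swap_apply_apply,
          hcv.1, hcv.2.1, hcv.2.2.1, hcv.2.2.2]
      rw [← key]
      exact mul_mem (mul_mem hcmem hprev) (inv_mem hcmem)

end cycmem
/-! ### pairs of disjoint parity-pure transpositions -/

section pairs
variable {n m : ℕ}

lemma M2same (hn : 7 ≤ n) (hnm : n % 4 = 3) (hm : 3*n + 5 ≤ m)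
    (a b c d : ℕ) (h1 : 1 ≤ a) (h2 : 1 ≤ b) (h3 : 1 ≤ c) (h4 : 1 ≤ d)
    (ham : a ≤ m) (hbm : b ≤ m) (hcm : c ≤ m) (hdm : d ≤ m)
    (hab : a ≠ b) (hcd : c ≠ d) (hac : a ≠ c) (had : a ≠ d) (hbc : b ≠ c) (hbd : b ≠ d)
    (hp1 : a % 2 = b % 2) (hp2 : a % 2 = c % 2) (hp3 : a % 2 = d % 2) :
    Equiv.swap a b * Equiv.swap c d ∈ C n m := by
  rw [M2same_id a b c d hab hcd hac had hbc hbd]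
  exact mul_mem
    (trip_general hn hnm hm a c b h1 h3 h2 ham hcm hbm hp2 (by omega) hac (Ne.symm hbc) hab)
    (trip_general hn hnm hm a c d h1 h3 h4 ham hcm hdm hp2 (by omega) hac hcd had)

/-- cross-parity pairs in adjacent form. -/
lemma CP (hn : 7 ≤ n) (hnm : n % 4 = 3) (hm : 3*n + 5 ≤ m) :
    ∀ s α γ, α + γ = s → α % 2 ≠ γ % 2 → 1 ≤ α → 1 ≤ γ → α + 2 ≤ m → γ + 2 ≤ m →
      Equiv.swap α (α+2) * Equiv.swap γ (γ+2) ∈ C n m := by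
  intro s
  induction s using Nat.strong_induction_on with
  | _ s IH =>
    intro α γ hs hpar h1 h2 h3 h4
    rcases le_or_gt 5 γ with hγ | hγ
    · have step1 : Equiv.swap α (α+2) * Equiv.swap (γ-4) (γ-4+2) ∈ C n m := by
        apply IH (α + (γ-4)) (by omega) α (γ-4) rfl (by omega) h1 (by omega) h3 (by omega)
      have step2 : Equiv.swap (γ-4) (γ-4+2) * Equiv.swap γ (γ+2) ∈ C n m := by
        apply M2same hn hnm hm (γ-4) (γ-4+2) γ (γ+2) (by omega) (by omega) h2 (by omega)
          (by omega) (by omega) (by omega) h4 (by omega) (by omega) (by omega) (by omega)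
          (by omega) (by omega) (by omega) (by omega) (by omega)
      have := mul_mem step1 step2
      rwa [mul_assoc, ← mul_assoc (Equiv.swap (γ-4) (γ-4+2)), Equiv.swap_mul_self,
        one_mul] at this
    rcases le_or_gt 5 α with hα | hα
    · have step1 : Equiv.swap α (α+2) * Equiv.swap (α-4) (α-4+2) ∈ C n m := by
        apply M2same hn hnm hm α (α+2) (α-4) (α-4+2) h1 (by omega) (by omega) (by omega)
          (by omega) h3 (by omega) (by omega) (by omega) (by omega) (by omega) (by omega)
          (by omega) (by omega) (by omega) (by omega) (by omega)
      have step2 : Equiv.swap (α-4) (α-4+2) * Equiv.swap γ (γ+2) ∈ C n m := by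
        apply IH ((α-4) + γ) (by omega) (α-4) γ rfl (by omega) (by omega) h2 (by omega) h4
      have := mul_mem step1 step2
      rwa [mul_assoc, ← mul_assoc (Equiv.swap (α-4) (α-4+2)), Equiv.swap_mul_self,
        one_mul] at this
    · -- α, γ ≤ 4
      have hm26 : 26 ≤ m := by omega
      rcases le_or_gt α γ with hle | hle
      · -- γ = α + 1 or γ = α + 3
        rcases (show γ = α + 1 ∨ γ = α + 3 by omega) with h | h
        · subst h
          exact F_mem hn hnm hm α h1 (by omega)
        · subst h
          -- conjugate F by φ = trip (α+1) (α+3) (α+5)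
          set φ := trip (α+1) (α+3) (α+5) with hφ
          have hφmem : φ ∈ C n m := by
            rw [hφ, show trip (α+1) (α+3) (α+5) = trip (α+1) ((α+1)+2) ((α+1)+4) from rfl]
            exact trip_adj hn hnm hm (α+1) (by omega) (by omega)
          have hF := F_mem hn hnm hm α h1 (by omega)
          have hv : φ α = α ∧ φ (α+2) = α+2 ∧ φ (α+1) = α+3 ∧ φ (α+3) = α+5 := by
            rw [hφ]
            refine ⟨?_, ?_, ?_, ?_⟩ <;>
              · rw [trip_apply _ _ _ _ (by omega) (by omega) (by omega)]
                split_ifs <;> omega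
          have key : φ * (Equiv.swap α (α+2) * Equiv.swap (α+1) (α+3)) * φ⁻¹ =
              Equiv.swap α (α+2) * Equiv.swap (α+3) (α+3+2) := by
            rw [show φ * (Equiv.swap α (α+2) * Equiv.swap (α+1) (α+3)) * φ⁻¹
                = (φ * Equiv.swap α (α+2) * φ⁻¹) * (φ * Equiv.swap (α+1) (α+3) * φ⁻¹) by group]
            rw [← Equiv.swap_apply_apply, ← Equiv.swap_apply_apply,
              hv.1, hv.2.1, hv.2.2.1, hv.2.2.2]
          rw [← key]
          exact mul_mem (mul_mem hφmem hF) (inv_mem hφmem)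
      · -- α = γ + 1 or γ + 3 : commute and reuse
        have hcomm : Equiv.swap α (α+2) * Equiv.swap γ (γ+2) =
            Equiv.swap γ (γ+2) * Equiv.swap α (α+2) := by
          apply swap_comm_disj <;> omega
        rw [hcomm]
        rcases (show α = γ + 1 ∨ α = γ + 3 by omega) with h | h
        · subst h
          exact F_mem hn hnm hm γ h2 (by omega)
        · subst h
          set φ := trip (γ+1) (γ+3) (γ+5) with hφ
          have hφmem : φ ∈ C n m := by
            rw [hφ, show trip (γ+1) (γ+3) (γ+5) = trip (γ+1) ((γ+1)+2) ((γ+1)+4) from rfl]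
            exact trip_adj hn hnm hm (γ+1) (by omega) (by omega)
          have hF := F_mem hn hnm hm γ h2 (by omega)
          have hv : φ γ = γ ∧ φ (γ+2) = γ+2 ∧ φ (γ+1) = γ+3 ∧ φ (γ+3) = γ+5 := by
            rw [hφ]
            refine ⟨?_, ?_, ?_, ?_⟩ <;>
              · rw [trip_apply _ _ _ _ (by omega) (by omega) (by omega)]
                split_ifs <;> omega
          have key : φ * (Equiv.swap γ (γ+2) * Equiv.swap (γ+1) (γ+3)) * φ⁻¹ =
              Equiv.swap γ (γ+2) * Equiv.swap (γ+3) (γ+3+2) := by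
            rw [show φ * (Equiv.swap γ (γ+2) * Equiv.swap (γ+1) (γ+3)) * φ⁻¹
                = (φ * Equiv.swap γ (γ+2) * φ⁻¹) * (φ * Equiv.swap (γ+1) (γ+3) * φ⁻¹) by group]
            rw [← Equiv.swap_apply_apply, ← Equiv.swap_apply_apply,
              hv.1, hv.2.1, hv.2.2.1, hv.2.2.2]
          rw [← key]
          exact mul_mem (mul_mem hφmem hF) (inv_mem hφmem)

/-- disjointness of two swaps. -/
lemma disjoint_swap_swap (a b c d : ℕ) (h1 : a ≠ c) (h2 : a ≠ d) (h3 : b ≠ c) (h4 : b ≠ d) :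
    Equiv.Perm.Disjoint (Equiv.swap a b) (Equiv.swap c d) := by
  intro x
  by_cases h : x = a ∨ x = b
  · right
    rcases h with h | h <;> subst h <;> exact Equiv.swap_apply_of_ne_of_ne (by omega) (by omega)
  · left
    push_neg at h
    exact Equiv.swap_apply_of_ne_of_ne h.1 h.2

/-- full pair lemma, cross-parity case. -/
lemma M2cross (hn : 7 ≤ n) (hnm : n % 4 = 3) (hm : 3*n + 5 ≤ m)
    (a b c d : ℕ) (h1 : 1 ≤ a) (h3 : 1 ≤ c)
    (hbm : b ≤ m) (hdm : d ≤ m)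
    (hab : a < b) (hcd : c < d)
    (hp1 : a % 2 = b % 2) (hp2 : c % 2 = d % 2) (hx : a % 2 ≠ c % 2) :
    Equiv.swap a b * Equiv.swap c d ∈ C n m := by
  have ha2 : a + 2 ≤ m := by omega
  have hc2 : c + 2 ≤ m := by omega
  have hCP : Equiv.swap a (a+2) * Equiv.swap c (c+2) ∈ C n m :=
    CP hn hnm hm (a+c) a c rfl hx h1 h3 ha2 hc2
  -- commute : swap a (a+2) ↔ trip c (c+2) d  (parity-disjoint)
  have hcomm : Equiv.swap a (a+2) * trip c (c+2) d = trip c (c+2) d * Equiv.swap a (a+2) := by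
    have d1 : Equiv.Perm.Disjoint (Equiv.swap a (a+2)) (Equiv.swap c d) :=
      disjoint_swap_swap _ _ _ _ (by omega) (by omega) (by omega) (by omega)
    have d2 : Equiv.Perm.Disjoint (Equiv.swap a (a+2)) (Equiv.swap c (c+2)) :=
      disjoint_swap_swap _ _ _ _ (by omega) (by omega) (by omega) (by omega)
    exact (Equiv.Perm.Disjoint.mul_right d1 d2).commute.eq
  by_cases hb2 : b = a + 2
  · by_cases hd2 : d = c + 2
    · subst hb2; subst hd2; exact hCP
    · subst hb2
      rw [swapdecomp c d (by omega) hd2, ← mul_assoc, hcomm, mul_assoc]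
      exact mul_mem
        (trip_general hn hnm hm c (c+2) d h3 (by omega) (by omega) (by omega) (by omega) hdm
          (by omega) (by omega) (by omega) (by omega) (by omega)) hCP
  · by_cases hd2 : d = c + 2
    · subst hd2
      rw [swapdecomp a b (by omega) hb2, mul_assoc]
      exact mul_mem
        (trip_general hn hnm hm a (a+2) b h1 (by omega) (by omega) (by omega) (by omega) hbm
          (by omega) (by omega) (by omega) (by omega) (by omega)) hCP
    · rw [swapdecomp a b (by omega) hb2, swapdecomp c d (by omega) hd2]
      have key : trip a (a+2) b * Equiv.swap a (a+2) * (trip c (c+2) d * Equiv.swap c (c+2)) =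
          trip a (a+2) b * (trip c (c+2) d * (Equiv.swap a (a+2) * Equiv.swap c (c+2))) := by
        rw [mul_assoc (trip a (a+2) b), ← mul_assoc (Equiv.swap a (a+2)), hcomm]
        group
      rw [key]
      exact mul_mem
        (trip_general hn hnm hm a (a+2) b h1 (by omega) (by omega) (by omega) (by omega) hbm
          (by omega) (by omega) (by omega) (by omega) (by omega))
        (mul_mem
          (trip_general hn hnm hm c (c+2) d h3 (by omega) (by omega) (by omega) (by omega) hdm
            (by omega) (by omega) (by omega) (by omega) (by omega)) hCP)

/-- full pair lemma. -/
lemma M2 (hn : 7 ≤ n) (hnm : n % 4 = 3) (hm : 3*n + 5 ≤ m)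
    (a b c d : ℕ) (h1 : 1 ≤ a) (h2 : 1 ≤ b) (h3 : 1 ≤ c) (h4 : 1 ≤ d)
    (ham : a ≤ m) (hbm : b ≤ m) (hcm : c ≤ m) (hdm : d ≤ m)
    (hab : a ≠ b) (hcd : c ≠ d) (hac : a ≠ c) (had : a ≠ d) (hbc : b ≠ c) (hbd : b ≠ d)
    (hp1 : a % 2 = b % 2) (hp2 : c % 2 = d % 2) :
    Equiv.swap a b * Equiv.swap c d ∈ C n m := by
  by_cases hx : a % 2 = c % 2
  · exact M2same hn hnm hm a b c d h1 h2 h3 h4 ham hbm hcm hdm hab hcd hac had hbc hbd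
      hp1 hx (by omega)
  · -- normalise order
    rcases le_or_gt a b with hab' | hab'
    · rcases le_or_gt c d with hcd' | hcd'
      · exact M2cross hn hnm hm a b c d h1 h3 hbm hdm (by omega) (by omega) hp1 hp2 hx
      · rw [Equiv.swap_comm c d]
        exact M2cross hn hnm hm a b d c h1 h4 hbm hcm (by omega) (by omega) hp1 (by omega) (by omega)
    · rcases le_or_gt c d with hcd' | hcd'
      · rw [Equiv.swap_comm a b]
        exact M2cross hn hnm hm b a c d h2 h3 ham hdm (by omega) (by omega) (by omega) hp2 (by omega)
      · rw [Equiv.swap_comm a b, Equiv.swap_comm c d]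
        exact M2cross hn hnm hm b a d c h2 h4 ham hcm (by omega) (by omega) (by omega) (by omega) (by omega)

end pairs
/-! ### products of disjoint transpositions -/

def swProd (L : List (ℕ × ℕ)) : Equiv.Perm ℕ := (L.map fun p => Equiv.swap p.1 p.2).prod

def PDisj (p q : ℕ × ℕ) : Prop := p.1 ≠ q.1 ∧ p.1 ≠ q.2 ∧ p.2 ≠ q.1 ∧ p.2 ≠ q.2

lemma swProd_nil : swProd [] = 1 := rfl

lemma swProd_cons (p : ℕ × ℕ) (L : List (ℕ × ℕ)) :
    swProd (p :: L) = Equiv.swap p.1 p.2 * swProd L := by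
  simp [swProd]

lemma swProd_append (L₁ L₂ : List (ℕ × ℕ)) :
    swProd (L₁ ++ L₂) = swProd L₁ * swProd L₂ := by
  simp [swProd]

lemma swProd_fix {P : ℕ → Prop} : ∀ L : List (ℕ × ℕ),
    (∀ p ∈ L, P p.1 ∧ P p.2) → ∀ x, ¬ P x → swProd L x = x := by
  intro L
  induction L with
  | nil => intro _ x _; rfl
  | cons p L ih =>
    intro hL x hx
    rw [swProd_cons, Equiv.Perm.mul_apply, ih (fun q hq => hL q (List.mem_cons_of_mem p hq)) x hx]
    have := hL p (List.mem_cons_self)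
    exact Equiv.swap_apply_of_ne_of_ne (fun h => hx (h ▸ this.1)) (fun h => hx (h ▸ this.2))

lemma swProd_maps {P : ℕ → Prop} : ∀ L : List (ℕ × ℕ),
    (∀ p ∈ L, P p.1 ∧ P p.2) → ∀ x, swProd L x = x ∨ P (swProd L x) := by
  intro L
  induction L with
  | nil => intro _ x; left; rfl
  | cons p L ih =>
    intro hL x
    have hp := hL p (List.mem_cons_self)
    rw [swProd_cons, Equiv.Perm.mul_apply]
    set y := swProd L x with hy
    have hIH := ih (fun q hq => hL q (List.mem_cons_of_mem p hq)) x
    rw [swap_apply]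
    split_ifs with e1 e2
    · right; exact hp.2
    · right; exact hp.1
    · rcases hIH with h | h
      · left; exact h
      · right; exact h

lemma swProd_parity : ∀ L : List (ℕ × ℕ),
    (∀ p ∈ L, p.1 % 2 = p.2 % 2) → ∀ x, swProd L x % 2 = x % 2 := by
  intro L
  induction L with
  | nil => intro _ x; rfl
  | cons p L ih =>
    intro hL x
    have hp := hL p (List.mem_cons_self)
    rw [swProd_cons, Equiv.Perm.mul_apply]
    have hIH := ih (fun q hq => hL q (List.mem_cons_of_mem p hq)) x
    rw [swap_apply]
    split_ifs with e1 e2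
    · rw [← hp, ← e1]; exact hIH
    · rw [hp, ← e2]; exact hIH
    · exact hIH

lemma swProd_conj (f : Equiv.Perm ℕ) : ∀ L : List (ℕ × ℕ),
    f * swProd L * f⁻¹ = swProd (L.map fun p => (f p.1, f p.2)) := by
  intro L
  induction L with
  | nil => simp [swProd_nil]
  | cons p L ih =>
    rw [List.map_cons, swProd_cons, swProd_cons]
    rw [show f * (Equiv.swap p.1 p.2 * swProd L) * f⁻¹
        = (f * Equiv.swap p.1 p.2 * f⁻¹) * (f * swProd L * f⁻¹) by group]
    rw [← Equiv.swap_apply_apply, ih]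

lemma disjoint_swap_swProd (q : ℕ × ℕ) : ∀ L : List (ℕ × ℕ),
    (∀ p ∈ L, PDisj q p) → Equiv.Perm.Disjoint (Equiv.swap q.1 q.2) (swProd L) := by
  intro L
  induction L with
  | nil => intro _ x; right; rfl
  | cons p L ih =>
    intro hL
    rw [swProd_cons]
    have hq := hL p (List.mem_cons_self)
    exact Equiv.Perm.Disjoint.mul_right
      (disjoint_swap_swap _ _ _ _ hq.1 hq.2.1 hq.2.2.1 hq.2.2.2)
      (ih (fun r hr => hL r (List.mem_cons_of_mem p hr)))

lemma swProd_sq : ∀ L : List (ℕ × ℕ), L.Pairwise PDisj → swProd L * swProd L = 1 := by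
  intro L
  induction L with
  | nil => intro _; rw [swProd_nil, one_mul]
  | cons p L ih =>
    intro hP
    rw [List.pairwise_cons] at hP
    have hd := disjoint_swap_swProd p L hP.1
    rw [swProd_cons]
    calc Equiv.swap p.1 p.2 * swProd L * (Equiv.swap p.1 p.2 * swProd L)
        = Equiv.swap p.1 p.2 * (swProd L * Equiv.swap p.1 p.2) * swProd L := by group
      _ = Equiv.swap p.1 p.2 * (Equiv.swap p.1 p.2 * swProd L) * swProd L := by
          rw [hd.commute.eq]
      _ = (Equiv.swap p.1 p.2 * Equiv.swap p.1 p.2) * (swProd L * swProd L) := by group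
      _ = 1 := by rw [Equiv.swap_mul_self, ih hP.2, one_mul]

lemma disjoint_swProd_cross (a k hi : ℕ) (hha : hi ≤ a) : ∀ L : List (ℕ × ℕ),
    (∀ p ∈ L, p.1 < hi ∧ p.2 < hi) →
    Equiv.Perm.Disjoint (swProd L) (crossPerm k a) := by
  intro L hL x
  by_cases hx : a ≤ x ∧ x < a + k
  · left
    exact swProd_fix (P := fun y => y < hi) L (fun p hp => hL p hp) x (by omega)
  · right
    rw [crossPerm_apply, if_neg hx]

/-! ### the recursion -/

def Vt (n : ℕ) : ℕ → ℕ → Equiv.Perm ℕ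
  | 0, x => crossPerm n x
  | t+1, x => Vt n t (x+1) * Vt n t x * Vt n t (x+1)

section vt
variable {n m : ℕ}

lemma Vt_mem : ∀ t x, 1 ≤ x → x + t + n ≤ m + 1 → n ≤ m → Vt n t x ∈ C n m := by
  intro t
  induction t with
  | zero => intro x h1 h2 h3; exact gen_mem x h1 (by omega) h3
  | succ t ih =>
    intro x h1 h2 h3
    have v0 := ih x h1 (by omega) h3
    have v1 := ih (x+1) (by omega) (by omega) h3
    exact mul_mem (mul_mem v1 v0) v1

lemma key_regroup {G : Type*} [Group G] (w1 w0 r1 r0 s r' : G)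
    (c1 : r1 * w0 = w0 * r1) (c2 : r1 * w1 = w1 * r1) (c3 : r' * w1 = w1 * r')
    (hA : r1 * r0 * r1 = s * r') :
    (w1 * r1) * (w0 * r0) * (w1 * r1) = (w1 * (w0 * s) * w1) * r' := by
  calc (w1 * r1) * (w0 * r0) * (w1 * r1)
      = w1 * (r1 * w0) * (r0 * (w1 * r1)) := by group
    _ = w1 * (w0 * r1) * (r0 * (r1 * w1)) := by rw [c1, ← c2]
    _ = (w1 * w0) * ((r1 * r0 * r1) * w1) := by group
    _ = (w1 * w0) * ((s * r') * w1) := by rw [hA]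
    _ = (w1 * w0) * (s * (r' * w1)) := by group
    _ = (w1 * w0) * (s * (w1 * r')) := by rw [c3]
    _ = (w1 * (w0 * s) * w1) * r' := by group

lemma Vt_struct (hn : 7 ≤ n) : ∀ t x, 2*t + 3 ≤ n → 1 ≤ x →
    ∃ L : List (ℕ × ℕ),
      (∀ p ∈ L, p.1 % 2 = p.2 % 2 ∧ x ≤ p.1 ∧ p.1 < x + 3*t ∧ x ≤ p.2 ∧ p.2 < x + 3*t ∧
        p.1 ≠ p.2) ∧
      L.Pairwise PDisj ∧ L.length = t ∧
      Vt n t x = swProd L * crossPerm (n - 2*t) (x + 3*t) := by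
  intro t
  induction t with
  | zero =>
    intro x _ _
    refine ⟨[], by simp, List.Pairwise.nil, rfl, ?_⟩
    rw [swProd_nil, one_mul]
    show crossPerm n x = _
    congr 1 <;> omega
  | succ t ih =>
    intro x ht hx
    obtain ⟨L₀, hL₀, hP₀, hlen₀, hV₀⟩ := ih x (by omega) hx
    obtain ⟨L₁, hL₁, hP₁, hlen₁, hV₁⟩ := ih (x+1) (by omega) (by omega)
    set k := n - 2*t with hk
    have hk5 : 5 ≤ k := by omega
    set w0 := swProd L₀ with hw0
    set w1 := swProd L₁ with hw1
    have hV₁' : Vt n t (x+1) = w1 * crossPerm k ((x + 3*t) + 1) := by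
      rw [hV₁]; congr 2; omega
    -- commutations
    have hbnd₀ : ∀ p ∈ L₀, p.1 < x + 3*t ∧ p.2 < x + 3*t :=
      fun p hp => ⟨(hL₀ p hp).2.2.1, (hL₀ p hp).2.2.2.2.1⟩
    have hbnd₁ : ∀ p ∈ L₁, p.1 < x + 3*t + 1 ∧ p.2 < x + 3*t + 1 := by
      intro p hp
      have := hL₁ p hp
      omega
    have c1 : crossPerm k ((x+3*t)+1) * w0 = w0 * crossPerm k ((x+3*t)+1) :=
      ((disjoint_swProd_cross ((x+3*t)+1) k (x+3*t) (by omega) L₀ hbnd₀).symm.commute.eq)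
    have c2 : crossPerm k ((x+3*t)+1) * w1 = w1 * crossPerm k ((x+3*t)+1) :=
      ((disjoint_swProd_cross ((x+3*t)+1) k (x+3*t+1) (by omega) L₁ hbnd₁).symm.commute.eq)
    have c3 : crossPerm (k-2) ((x+3*t)+3) * w1 = w1 * crossPerm (k-2) ((x+3*t)+3) :=
      ((disjoint_swProd_cross ((x+3*t)+3) (k-2) (x+3*t+1) (by omega) L₁ hbnd₁).symm.commute.eq)
    have hAid := Aid k (x+3*t) hk5
    have hstep : Vt n (t+1) x =
        (w1 * (w0 * Equiv.swap (x+3*t) (x+3*t+2)) * w1) * crossPerm (k-2) ((x+3*t)+3) := by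
      show Vt n t (x+1) * Vt n t x * Vt n t (x+1) = _
      rw [hV₁', hV₀]
      exact key_regroup w1 w0 (crossPerm k ((x+3*t)+1)) (crossPerm k (x+3*t))
        (Equiv.swap (x+3*t) (x+3*t+2)) (crossPerm (k-2) ((x+3*t)+3)) c1 c2 c3 hAid
    -- rewrite middle as a conjugated product
    have hw1sq : w1 * w1 = 1 := swProd_sq L₁ hP₁
    have hw1inv : w1⁻¹ = w1 := inv_eq_of_mul_eq_one_right hw1sq
    set M := L₀ ++ [(x+3*t, x+3*t+2)] with hM
    have hMprod : w0 * Equiv.swap (x+3*t) (x+3*t+2) = swProd M := by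
      rw [hM, swProd_append, swProd_cons, swProd_nil, mul_one]
    set Lnew := M.map (fun p => (w1 p.1, w1 p.2)) with hLnew
    have hconj : w1 * swProd M * w1 = swProd Lnew := by
      have := swProd_conj w1 M
      rw [hw1inv] at this
      exact this
    -- bounds on w1-images
    have hmaps : ∀ u, u ≤ x + 3*t + 2 → x ≤ u → (w1 u ≤ x + 3*t ∧ x ≤ w1 u) ∨ w1 u = u := by
      intro u hu1 hu2
      have := swProd_maps (P := fun y => x + 1 ≤ y ∧ y < x + 1 + 3*t) L₁
        (by intro p hp; have := hL₁ p hp; omega) u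
      rw [← hw1] at this
      rcases this with h | h
      · right; exact h
      · left; omega
    have hpar1 : ∀ u, w1 u % 2 = u % 2 := by
      intro u
      have := swProd_parity L₁ (fun p hp => (hL₁ p hp).1) u
      rw [← hw1] at this
      exact this
    refine ⟨Lnew, ?_, ?_, ?_, ?_⟩
    · intro p hp
      rw [hLnew] at hp
      obtain ⟨q, hq, rfl⟩ := List.mem_map.mp hp
      have hqM : (q.1 % 2 = q.2 % 2 ∧ x ≤ q.1 ∧ q.1 ≤ x+3*t+2 ∧ x ≤ q.2 ∧ q.2 ≤ x+3*t+2) ∧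
          q.1 ≠ q.2 := by
        rw [hM] at hq
        rcases List.mem_append.mp hq with h | h
        · have := hL₀ q h
          exact ⟨⟨this.1, by omega, by omega, by omega, by omega⟩, this.2.2.2.2.2⟩
        · have : q = (x+3*t, x+3*t+2) := by simpa using h
          subst this
          exact ⟨⟨by omega, by omega, by omega, by omega, by omega⟩, by omega⟩
      have h1 := hmaps q.1 hqM.1.2.2.1 hqM.1.2.1
      have h2 := hmaps q.2 hqM.1.2.2.2.2 hqM.1.2.2.2.1
      refine ⟨?_, ?_, ?_, ?_, ?_, ?_⟩
      · rw [hpar1 q.1, hpar1 q.2]; exact hqM.1.1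
      · show x ≤ w1 q.1
        rcases h1 with h | h <;> omega
      · show w1 q.1 < x + 3*(t+1)
        rcases h1 with h | h <;> omega
      · show x ≤ w1 q.2
        rcases h2 with h | h <;> omega
      · show w1 q.2 < x + 3*(t+1)
        rcases h2 with h | h <;> omega
      · exact fun h => hqM.2 (w1.injective h)
    · have hMP : M.Pairwise PDisj := by
        rw [hM, List.pairwise_append]
        refine ⟨hP₀, List.pairwise_singleton _ _, ?_⟩
        intro p hp q hq
        have hb := hbnd₀ p hp
        have : q = (x+3*t, x+3*t+2) := by simpa using hq
        subst this
        exact ⟨by omega, by omega, by omega, by omega⟩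
      rw [hLnew]
      refine hMP.map _ ?_
      intro p q hpq
      refine ⟨?_, ?_, ?_, ?_⟩ <;>
        · intro h
          first
          | exact hpq.1 (w1.injective h) | exact hpq.2.1 (w1.injective h)
          | exact hpq.2.2.1 (w1.injective h) | exact hpq.2.2.2 (w1.injective h)
    · rw [hLnew, hM]
      simp [hlen₀]
    · rw [hstep, hMprod, hconj]
      congr 2 <;> omega

lemma swProd_even_mem (hn : 7 ≤ n) (hnm : n % 4 = 3) (hm : 3*n + 5 ≤ m) :
    ∀ r (L : List (ℕ × ℕ)), L.length = 2*r →
      (∀ p ∈ L, p.1 % 2 = p.2 % 2 ∧ 1 ≤ p.1 ∧ p.1 ≤ m ∧ 1 ≤ p.2 ∧ p.2 ≤ m ∧ p.1 ≠ p.2) →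
      L.Pairwise PDisj → swProd L ∈ C n m := by
  intro r
  induction r with
  | zero =>
    intro L hL _ _
    have : L = [] := List.length_eq_zero_iff.mp (by omega)
    subst this
    rw [swProd_nil]
    exact Subgroup.one_mem _
  | succ r ih =>
    intro L hlen hmem hpair
    match L, hlen with
    | p :: q :: L', hlen =>
      rw [swProd_cons, swProd_cons, ← mul_assoc]
      have hp := hmem p (by simp)
      have hq := hmem q (by simp)
      have hpq : PDisj p q := by
        rw [List.pairwise_cons] at hpair
        exact hpair.1 q (by simp)
      refine mul_mem (M2 hn hnm hm p.1 p.2 q.1 q.2 hp.2.1 hp.2.2.2.1 hq.2.1 hq.2.2.2.1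
        hp.2.2.1 hp.2.2.2.2.1 hq.2.2.1 hq.2.2.2.2.1 hp.2.2.2.2.2 hq.2.2.2.2.2
        hpq.1 hpq.2.1 hpq.2.2.1 hpq.2.2.2 hp.1 hq.1) ?_
      apply ih L' (by simp only [List.length_cons] at hlen; omega)
      · intro s hs; exact hmem s (by simp [hs])
      · rw [List.pairwise_cons] at hpair
        have := hpair.2
        rw [List.pairwise_cons] at this
        exact this.2

/-- single swaps at high positions. -/
lemma s_high (hn : 7 ≤ n) (hnm : n % 4 = 3) (hm : 3*n + 5 ≤ m)
    (p : ℕ) (hp1 : 3*((n-3)/2) + 1 ≤ p) (hp2 : p + 2 ≤ m) :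
    Equiv.swap p (p+2) ∈ C n m := by
  set T := (n-3)/2 with hT
  set x := p - 3*T with hx
  have hx1 : 1 ≤ x := by omega
  obtain ⟨L, hL, hP, hlen, hV⟩ := Vt_struct hn T x (by omega) hx1
  have hVC : Vt n T x ∈ C n m := Vt_mem T x hx1 (by omega) (by omega)
  have h3 : n - 2*T = 3 := by omega
  have hx3 : x + 3*T = p := by omega
  rw [h3, hx3, crossPerm_three] at hV
  have hLC : swProd L ∈ C n m := by
    apply swProd_even_mem hn hnm hm ((n-3)/4) L (by omega)
    · intro q hq
      have := hL q hq
      refine ⟨this.1, by omega, by omega, by omega, by omega, this.2.2.2.2.2⟩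
    · exact hP
  have : Equiv.swap p (p+2) = (swProd L)⁻¹ * Vt n T x := by
    rw [hV, ← mul_assoc, inv_mul_cancel, one_mul]
  rw [this]
  exact mul_mem (inv_mem hLC) hVC

/-- all single swaps (for 7 ≤ n). -/
lemma s_all (hn : 7 ≤ n) (hnm : n % 4 = 3) (hm : 3*n + 5 ≤ m)
    (p : ℕ) (hp1 : 1 ≤ p) (hp2 : p + 2 ≤ m) :
    Equiv.swap p (p+2) ∈ C n m := by
  have key : ∀ d p, 3*((n-3)/2) + 1 ≤ p + d → 1 ≤ p → p + 2 ≤ m →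
      Equiv.swap p (p+2) ∈ C n m := by
    intro d
    induction d with
    | zero => intro p h1 h2 h3; exact s_high hn hnm hm p (by omega) h3
    | succ d ih =>
      intro p h1 h2 h3
      by_cases hp : 3*((n-3)/2) + 1 ≤ p
      · exact s_high hn hnm hm p hp h3
      · have hnext : Equiv.swap (p+2) (p+2+2) ∈ C n m := by
          apply ih (p+2) (by omega) (by omega) (by omega)
        set φ := trip p (p+2) (p+4) with hφ
        have hφmem : φ ∈ C n m := trip_adj hn hnm hm p h2 (by omega)
        have hconj := trip_conj φ⁻¹ (p+2) (p+4) 0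
        have hv : φ⁻¹ (p+2) = p ∧ φ⁻¹ (p+4) = p+2 := by
          rw [hφ, trip_inv]
          constructor <;>
            · rw [trip_apply _ _ _ _ (by omega) (by omega) (by omega)]
              split_ifs <;> omega
        have key2 : φ⁻¹ * Equiv.swap (p+2) (p+4) * φ = Equiv.swap p (p+2) := by
          rw [show φ⁻¹ * Equiv.swap (p+2) (p+4) * φ = φ⁻¹ * Equiv.swap (p+2) (p+4) * φ⁻¹⁻¹ by
            rw [inv_inv]]
          rw [← Equiv.swap_apply_apply, hv.1, hv.2]
        rw [← key2]
        have : Equiv.swap (p+2) (p+4) = Equiv.swap (p+2) (p+2+2) := by norm_num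
        rw [this]
        exact mul_mem (mul_mem (inv_mem hφmem) hnext) hφmem
  exact key (3*((n-3)/2) + 1) p (by omega) hp1 hp2

end vt
theorem stmt13 (n : ℕ) (hn : n % 4 = 3) (hn3 : 3 ≤ n)
    (m : ℕ) (hm : 3 * n + 5 ≤ m) :
    (∀ i, 1 ≤ i → i + 2 ≤ m → Equiv.swap i (i + 2) ∈ C n m) ∧
    (∀ σ : Equiv.Perm ℕ, σ ∈ C n m ↔
      ((∀ i, 1 ≤ i → i ≤ m → σ i % 2 = i % 2) ∧ (∀ i, σ i ≠ i → 1 ≤ i ∧ i ≤ m))) := by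
  have part1 : ∀ i, 1 ≤ i → i + 2 ≤ m → Equiv.swap i (i + 2) ∈ C n m := by
    intro i h1 h2
    by_cases h3 : n = 3
    · subst h3
      rw [← crossPerm_three]
      exact gen_mem i h1 (by omega) (by omega)
    · have hn7 : 7 ≤ n := by omega
      exact s_all hn7 hn hm i h1 h2
  refine ⟨part1, ?_⟩
  intro σ
  constructor
  · intro h
    exact C_le_K hn (by omega) h
  · rintro ⟨h1, h2⟩
    apply sort_aux (by omega) hn part1 m σ ⟨h1, h2⟩
    intro y hy
    by_contra hc
    have := (h2 y hc).2
    omega
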